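/- The polyhedron H = {u ∈ R^{k+ℓ} : Σ_{i≤r} u_i ≤ L_r (1 ≤ r ≤ k), Σ_{j≤s} u_{k+j} ≤ C_s (1 ≤ s ≤ ℓ), Σ_i u_i = |λ|, u ≥ 0} is an integral polyhedron, i.e., H equals the convex hull of its integer points. -/

import Mathlib

open Finset

def chainSet (N : ℕ) (lov hiv : Fin N → ℤ) : Set (Fin N → ℝ) :=
  {y | Monotone y ∧ ∀ m, (lov m : ℝ) ≤ y m ∧ y m ≤ (hiv m : ℝ)}

lemma int_of_fract_zero {x : ℝ} (h : Int.fract x = 0) : ∃ z : ℤ, x = z :=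
  ⟨⌊x⌋, by have h2 := Int.self_sub_fract x; rw [h] at h2; linarith⟩

lemma fract_zero_of_eq_int {x : ℝ} {z : ℤ} (h : x = (z : ℝ)) : Int.fract x = 0 := by
  rw [h, Int.fract_intCast]

lemma chainSet_convex (N : ℕ) (lov hiv : Fin N → ℤ) : Convex ℝ (chainSet N lov hiv) := by
  intro x hx y hy a b ha hb hab
  refine ⟨fun i j hij => ?_, fun m => ⟨?_, ?_⟩⟩ <;>
    simp only [Pi.add_apply, Pi.smul_apply, smul_eq_mul]
  · have h1 := hx.1 hij; have h2 := hy.1 hij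
    nlinarith [mul_le_mul_of_nonneg_left h1 ha, mul_le_mul_of_nonneg_left h2 hb]
  · have h1 := (hx.2 m).1; have h2 := (hy.2 m).1
    have h3 : a * (lov m : ℝ) + b * (lov m : ℝ) = (lov m : ℝ) := by
      rw [← add_mul, hab, one_mul]
    nlinarith [mul_le_mul_of_nonneg_left h1 ha, mul_le_mul_of_nonneg_left h2 hb]
  · have h1 := (hx.2 m).2; have h2 := (hy.2 m).2
    have h3 : a * (hiv m : ℝ) + b * (hiv m : ℝ) = (hiv m : ℝ) := by
      rw [← add_mul, hab, one_mul]
    nlinarith [mul_le_mul_of_nonneg_left h1 ha, mul_le_mul_of_nonneg_left h2 hb]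

lemma chain_subset_hull (N : ℕ) (lov hiv : Fin N → ℤ) (n : ℕ) :
    ∀ y ∈ chainSet N lov hiv,
    (univ.filter (fun m => Int.fract (y m) ≠ 0)).card ≤ n →
    y ∈ convexHull ℝ {y ∈ chainSet N lov hiv | ∀ m, ∃ z : ℤ, y m = z} := by
  induction n with
  | zero =>
    intro y hy hcard
    apply subset_convexHull
    refine ⟨hy, fun m => ?_⟩
    refine int_of_fract_zero (by_contra fun h => ?_)
    have hmem : m ∈ univ.filter (fun m => Int.fract (y m) ≠ 0) := by simp [h]
    have := Finset.card_pos.mpr ⟨m, hmem⟩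
    omega
  | succ n ih =>
    intro y hy hcard
    by_cases hall : ∀ m, Int.fract (y m) = 0
    · exact subset_convexHull _ _ ⟨hy, fun m => int_of_fract_zero (hall m)⟩
    push_neg at hall
    obtain ⟨m', hm'⟩ := hall
    set F : Finset (Fin N) := univ.filter (fun m => Int.fract (y m) ≠ 0) with hF
    have hFne : F.Nonempty := ⟨m', by simp [hF, hm']⟩
    obtain ⟨m₀, hm₀F, hm₀min⟩ := F.exists_min_image (fun m => Int.fract (y m)) hFne
    obtain ⟨m₁, hm₁F, hm₁max⟩ := F.exists_max_image (fun m => Int.fract (y m)) hFne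
    set θ : ℝ := Int.fract (y m₀) with hθdef
    set μ : ℝ := 1 - Int.fract (y m₁) with hμdef
    have hθ0 : 0 < θ := by
      have h1 : Int.fract (y m₀) ≠ 0 := by simpa [hF] using hm₀F
      exact lt_of_le_of_ne (Int.fract_nonneg (y m₀)) (Ne.symm h1)
    have hμ0 : 0 < μ := by
      have := Int.fract_lt_one (y m₁)
      simp only [hμdef]; linarith
    set e : Fin N → ℝ := fun m => if Int.fract (y m) ≠ 0 then 1 else 0 with he
    have hθle : ∀ m, Int.fract (y m) ≠ 0 → θ ≤ Int.fract (y m) := by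
      intro m hm; exact hm₀min m (by simp [hF, hm])
    have hμle : ∀ m, Int.fract (y m) ≠ 0 → Int.fract (y m) ≤ 1 - μ := by
      intro m hm; have := hm₁max m (by simp [hF, hm]); simp only [hμdef]; linarith
    have hint : ∀ m, Int.fract (y m) = 0 → y m = (⌊y m⌋ : ℝ) := by
      intro m hm; have h2 := Int.self_sub_fract (y m); rw [hm] at h2; linarith
    have hfloor : ∀ m, (⌊y m⌋ : ℝ) = y m - Int.fract (y m) := by
      intro m; have := Int.self_sub_fract (y m); linarith
    set yminus : Fin N → ℝ := fun m => y m - θ * e m with hym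
    set yplus : Fin N → ℝ := fun m => y m + μ * e m with hyp
    have he0 : ∀ m, Int.fract (y m) = 0 → e m = 0 := fun m hm => by simp [he, hm]
    have he1 : ∀ m, Int.fract (y m) ≠ 0 → e m = 1 := fun m hm => by simp [he, hm]
    have hmemminus : yminus ∈ chainSet N lov hiv := by
      constructor
      · intro i j hij
        have hmono := hy.1 hij
        show y i - θ * e i ≤ y j - θ * e j
        by_cases hfi : Int.fract (y i) = 0 <;> by_cases hfj : Int.fract (y j) = 0
        · rw [he0 i hfi, he0 j hfj]; linarith
        · -- i integral, j fractional : y i = ⌊y i⌋ ≤ ⌊y j⌋ = y j - fract ≤ y j - θ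
          rw [he0 i hfi, he1 j hfj]
          have h1 := hint i hfi
          have h3 : ⌊y i⌋ ≤ ⌊y j⌋ := Int.floor_le_floor hmono
          have h3' : (⌊y i⌋ : ℝ) ≤ (⌊y j⌋ : ℝ) := by exact_mod_cast h3
          have h4 := hθle j hfj
          have h5 := hfloor j
          linarith
        · rw [he1 i hfi, he0 j hfj]
          have := mul_pos hθ0 one_pos
          linarith
        · rw [he1 i hfi, he1 j hfj]; linarith
      · intro m
        constructor
        · show (lov m : ℝ) ≤ y m - θ * e m
          by_cases hm : Int.fract (y m) = 0
          · rw [he0 m hm]; have := (hy.2 m).1; linarith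
          · rw [he1 m hm]
            have h1 : (lov m : ℝ) ≤ y m := (hy.2 m).1
            have h2 : lov m ≤ ⌊y m⌋ := Int.le_floor.mpr h1
            have h2' : (lov m : ℝ) ≤ (⌊y m⌋ : ℝ) := by exact_mod_cast h2
            have h3 := hfloor m
            have h4 := hθle m hm
            linarith
        · show y m - θ * e m ≤ (hiv m : ℝ)
          have h1 := (hy.2 m).2
          have h2 : 0 ≤ θ * e m := by
            by_cases hm : Int.fract (y m) = 0
            · rw [he0 m hm]; simp
            · rw [he1 m hm]; linarith
          linarith
    have hmemplus : yplus ∈ chainSet N lov hiv := by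
      constructor
      · intro i j hij
        have hmono := hy.1 hij
        show y i + μ * e i ≤ y j + μ * e j
        by_cases hfi : Int.fract (y i) = 0 <;> by_cases hfj : Int.fract (y j) = 0
        · rw [he0 i hfi, he0 j hfj]; linarith
        · rw [he0 i hfi, he1 j hfj]; nlinarith
        · -- i fractional, j integral : y i + μ ≤ ⌊y i⌋ + 1 ≤ y j
          rw [he1 i hfi, he0 j hfj]
          have h1 := hint j hfj
          have h2 : (⌊y i⌋ : ℝ) < y i := by
            have h3 := hfloor i
            have h4 : 0 < Int.fract (y i) :=
              lt_of_le_of_ne (Int.fract_nonneg _) (Ne.symm hfi)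
            linarith
          have h3 : ⌊y i⌋ < ⌊y j⌋ := by
            have : (⌊y i⌋ : ℝ) < (⌊y j⌋ : ℝ) := by rw [← h1]; linarith
            exact_mod_cast this
          have h4 : (⌊y i⌋ : ℝ) + 1 ≤ (⌊y j⌋ : ℝ) := by exact_mod_cast h3
          have h5 := hfloor i
          have h6 := hμle i hfi
          linarith
        · rw [he1 i hfi, he1 j hfj]; linarith
      · intro m
        constructor
        · have h1 := (hy.2 m).1
          have h2 : 0 ≤ μ * e m := by
            by_cases hm : Int.fract (y m) = 0
            · rw [he0 m hm]; simp
            · rw [he1 m hm]; linarith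
          show (lov m : ℝ) ≤ y m + μ * e m
          linarith
        · show y m + μ * e m ≤ (hiv m : ℝ)
          by_cases hm : Int.fract (y m) = 0
          · rw [he0 m hm]; have := (hy.2 m).2; linarith
          · rw [he1 m hm]
            have h1 : y m ≤ (hiv m : ℝ) := (hy.2 m).2
            have h2 : (⌊y m⌋ : ℝ) < (hiv m : ℝ) := by
              have h3 := hfloor m
              have h4 : 0 < Int.fract (y m) :=
                lt_of_le_of_ne (Int.fract_nonneg _) (Ne.symm hm)
              linarith
            have h3 : ⌊y m⌋ < hiv m := by exact_mod_cast h2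
            have h4 : (⌊y m⌋ : ℝ) + 1 ≤ (hiv m : ℝ) := by exact_mod_cast h3
            have h5 := hfloor m
            have h6 := hμle m hm
            linarith
    have hcard_minus : (univ.filter (fun m => Int.fract (yminus m) ≠ 0)).card ≤ n := by
      have hsub : (univ.filter (fun m => Int.fract (yminus m) ≠ 0)) ⊆ F.erase m₀ := by
        intro m hm
        simp only [mem_filter, mem_univ, true_and] at hm
        have hmF : Int.fract (y m) ≠ 0 := by
          intro hc
          exact hm (by show Int.fract (y m - θ * e m) = 0; rw [he0 m hc]; simpa using hc)
        refine Finset.mem_erase.mpr ⟨?_, by simp [hF, hmF]⟩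
        intro hc
        apply hm
        rw [hc]
        show Int.fract (y m₀ - θ * e m₀) = 0
        have hf0 : Int.fract (y m₀) ≠ 0 := by simpa [hF] using hm₀F
        rw [he1 m₀ hf0, mul_one]
        exact fract_zero_of_eq_int (z := ⌊y m₀⌋) (by have := hfloor m₀; rw [hθdef]; linarith)
      have := Finset.card_le_card hsub
      have h2 := Finset.card_erase_of_mem hm₀F
      omega
    have hcard_plus : (univ.filter (fun m => Int.fract (yplus m) ≠ 0)).card ≤ n := by
      have hsub : (univ.filter (fun m => Int.fract (yplus m) ≠ 0)) ⊆ F.erase m₁ := by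
        intro m hm
        simp only [mem_filter, mem_univ, true_and] at hm
        have hmF : Int.fract (y m) ≠ 0 := by
          intro hc
          exact hm (by show Int.fract (y m + μ * e m) = 0; rw [he0 m hc]; simpa using hc)
        refine Finset.mem_erase.mpr ⟨?_, by simp [hF, hmF]⟩
        intro hc
        apply hm
        rw [hc]
        show Int.fract (y m₁ + μ * e m₁) = 0
        have hf1 : Int.fract (y m₁) ≠ 0 := by simpa [hF] using hm₁F
        rw [he1 m₁ hf1, mul_one]
        refine fract_zero_of_eq_int (z := ⌊y m₁⌋ + 1) ?_
        have h5 := hfloor m₁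
        push_cast
        simp only [hμdef]
        linarith
      have := Finset.card_le_card hsub
      have h2 := Finset.card_erase_of_mem hm₁F
      omega
    have h1 := ih yminus hmemminus hcard_minus
    have h2 := ih yplus hmemplus hcard_plus
    have hsum : (0:ℝ) < θ + μ := by linarith
    have hcomb := (convex_convexHull ℝ {y ∈ chainSet N lov hiv | ∀ m, ∃ z : ℤ, y m = z})
      h1 h2 (a := μ / (θ + μ)) (b := θ / (θ + μ))
      (by positivity) (by positivity)
      (by rw [← add_div, add_comm]; exact div_self (ne_of_gt hsum))
    convert hcomb using 1
    funext m
    simp only [Pi.add_apply, Pi.smul_apply, smul_eq_mul, hym, hyp]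
    field_simp
    ring

theorem chain_integral (N : ℕ) (lov hiv : Fin N → ℤ) :
    chainSet N lov hiv =
      convexHull ℝ {y ∈ chainSet N lov hiv | ∀ m, ∃ z : ℤ, y m = z} := by
  apply Set.Subset.antisymm
  · intro y hy
    exact chain_subset_hull N lov hiv _ y hy le_rfl
  · exact convexHull_min (fun y hy => hy.1) (chainSet_convex N lov hiv)

section Transfer
variable (k l : ℕ)

def SA (r : ℕ) (u : Fin (k+l) → ℝ) : ℝ :=
  ∑ i ∈ univ.filter (fun i : Fin (k+l) => (i : ℕ) < r), u i

def SB (t : ℕ) (u : Fin (k+l) → ℝ) : ℝ :=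
  ∑ i ∈ univ.filter (fun i : Fin (k+l) => k ≤ (i : ℕ) ∧ (i : ℕ) < t), u i

lemma SA_zero (u : Fin (k+l) → ℝ) : SA k l 0 u = 0 := by
  unfold SA
  rw [Finset.filter_false_of_mem (fun i _ => by omega)]
  simp

lemma SA_succ (r : ℕ) (hr : r < k+l) (u : Fin (k+l) → ℝ) :
    SA k l (r+1) u = SA k l r u + u ⟨r, hr⟩ := by
  unfold SA
  have h : univ.filter (fun i : Fin (k+l) => (i:ℕ) < r+1)
      = insert ⟨r, hr⟩ (univ.filter (fun i : Fin (k+l) => (i:ℕ) < r)) := by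
    ext i
    simp only [mem_filter, mem_univ, true_and, mem_insert, Fin.ext_iff]
    omega
  rw [h, Finset.sum_insert (by simp)]
  ring

lemma SB_k (u : Fin (k+l) → ℝ) : SB k l k u = 0 := by
  unfold SB
  rw [Finset.filter_false_of_mem (fun i _ => by omega)]
  simp

lemma SB_succ (t : ℕ) (ht1 : k ≤ t) (ht2 : t < k+l) (u : Fin (k+l) → ℝ) :
    SB k l (t+1) u = SB k l t u + u ⟨t, ht2⟩ := by
  unfold SB
  have h : univ.filter (fun i : Fin (k+l) => k ≤ (i:ℕ) ∧ (i:ℕ) < t+1)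
      = insert ⟨t, ht2⟩ (univ.filter (fun i : Fin (k+l) => k ≤ (i:ℕ) ∧ (i:ℕ) < t)) := by
    ext i
    simp only [mem_filter, mem_univ, true_and, mem_insert, Fin.ext_iff]
    omega
  rw [h, Finset.sum_insert (by simp)]
  ring

lemma SA_SB_total (u : Fin (k+l) → ℝ) : SA k l k u + SB k l (k+l) u = ∑ i, u i := by
  unfold SA SB
  rw [← Finset.sum_filter_add_sum_filter_not univ (fun i : Fin (k+l) => (i:ℕ) < k)]
  congr 1
  apply Finset.sum_congr ?_ (fun _ _ => rfl)
  ext i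
  simp only [mem_filter, mem_univ, true_and]
  have := i.isLt
  omega

lemma SA_nonneg (r : ℕ) (u : Fin (k+l) → ℝ) (hu : ∀ i, 0 ≤ u i) : 0 ≤ SA k l r u :=
  Finset.sum_nonneg fun i _ => hu i

lemma SB_nonneg (t : ℕ) (u : Fin (k+l) → ℝ) (hu : ∀ i, 0 ≤ u i) : 0 ≤ SB k l t u :=
  Finset.sum_nonneg fun i _ => hu i

def toU (y : Fin (k+l+1) → ℝ) (i : Fin (k+l)) : ℝ :=
  if h : (i : ℕ) < k then
    y ⟨(i:ℕ)+1, by omega⟩ - y ⟨(i:ℕ), by omega⟩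
  else
    y ⟨2*k+l-(i:ℕ), by have := i.isLt; omega⟩ - y ⟨2*k+l-1-(i:ℕ), by have := i.isLt; omega⟩

def phiL : (Fin (k+l+1) → ℝ) →ₗ[ℝ] (Fin (k+l) → ℝ) where
  toFun := toU k l
  map_add' y z := by
    funext i
    show toU k l (y + z) i = toU k l y i + toU k l z i
    unfold toU
    by_cases h : (i:ℕ) < k <;> simp [h] <;> ring
  map_smul' c y := by
    funext i
    show toU k l (c • y) i = c * toU k l y i
    unfold toU
    by_cases h : (i:ℕ) < k <;> simp [h] <;> ring

def toY (n : ℕ) (u : Fin (k+l) → ℝ) (m : Fin (k+l+1)) : ℝ :=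
  if (m:ℕ) ≤ k then SA k l (m:ℕ) u else (n:ℝ) - SB k l (2*k+l-(m:ℕ)) u

def hookSet (n : ℕ) (Lf Cf : ℕ → ℕ) : Set (Fin (k+l) → ℝ) :=
  {u | (∀ r, 1 ≤ r → r ≤ k → SA k l r u ≤ (Lf r : ℝ)) ∧
       (∀ s, 1 ≤ s → s ≤ l → SB k l (k+s) u ≤ (Cf s : ℝ)) ∧
       (∑ i, u i = (n : ℝ)) ∧ (∀ i, 0 ≤ u i)}

def hookLo (n : ℕ) (Cf : ℕ → ℕ) : Fin (k+l+1) → ℤ := fun m =>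
  if (m:ℕ) < k then 0 else if (m:ℕ) < k+l then (n:ℤ) - Cf (k+l-(m:ℕ)) else (n:ℤ)

def hookHi (n : ℕ) (Lf : ℕ → ℕ) : Fin (k+l+1) → ℤ := fun m =>
  if (m:ℕ) = 0 then 0 else if (m:ℕ) ≤ k then (Lf (m:ℕ) : ℤ) else (n:ℤ)

lemma A_toU (y : Fin (k+l+1) → ℝ) :
    ∀ r, (hr : r ≤ k) → SA k l r (toU k l y) = y ⟨r, by omega⟩ - y ⟨0, by omega⟩ := by
  intro r
  induction r with
  | zero => intro _; rw [SA_zero]; simp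
  | succ r ihr =>
    intro hr
    have hrk : r < k := by omega
    have hrkl : r < k + l := by omega
    rw [SA_succ k l r hrkl, ihr (by omega)]
    have htu : toU k l y ⟨r, hrkl⟩ = y ⟨r+1, by omega⟩ - y ⟨r, by omega⟩ := by
      unfold toU
      rw [dif_pos (show ((⟨r, hrkl⟩ : Fin (k+l)) : ℕ) < k from hrk)]
    rw [htu]
    ring

lemma B_toU (y : Fin (k+l+1) → ℝ) :
    ∀ s, (hs : s ≤ l) →
      SB k l (k+s) (toU k l y) = y ⟨k+l, by omega⟩ - y ⟨k+l-s, by omega⟩ := by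
  intro s
  induction s with
  | zero =>
    intro _
    simp only [Nat.add_zero, Nat.sub_zero]
    rw [SB_k]
    simp
  | succ s ihs =>
    intro hs
    have h1 : k ≤ k + s := by omega
    have h2 : k + s < k + l := by omega
    have : k + (s+1) = (k+s) + 1 := by omega
    rw [this, SB_succ k l (k+s) h1 h2, ihs (by omega)]
    have htu : toU k l y ⟨k+s, h2⟩ = y ⟨k+l-s, by omega⟩ - y ⟨k+l-s-1, by omega⟩ := by
      unfold toU
      rw [dif_neg (show ¬((⟨k+s, h2⟩ : Fin (k+l)) : ℕ) < k by simp)]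
      congr 1 <;> apply congrArg <;> apply Fin.ext <;> simp <;> omega
    rw [htu]
    have : (⟨k+l-(s+1), by omega⟩ : Fin (k+l+1)) = ⟨k+l-s-1, by omega⟩ := by
      apply Fin.ext; simp; omega
    rw [this]
    ring


lemma toU_mem (hk : 1 ≤ k) (hl : 1 ≤ l) (n : ℕ) (Lf Cf : ℕ → ℕ) (y : Fin (k+l+1) → ℝ)
    (hy : y ∈ chainSet (k+l+1) (hookLo k l n Cf) (hookHi k l n Lf)) :
    toU k l y ∈ hookSet k l n Lf Cf := by
  obtain ⟨hmono, hbd⟩ := hy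
  have hy0 : y ⟨0, by omega⟩ = 0 := by
    have h1 := (hbd ⟨0, by omega⟩).1
    have h2 := (hbd ⟨0, by omega⟩).2
    unfold hookLo at h1
    unfold hookHi at h2
    simp only at h1 h2
    rw [if_pos (by omega : (0:ℕ) < k)] at h1
    rw [if_pos trivial] at h2
    push_cast at h1 h2
    linarith
  have hyN : y ⟨k+l, by omega⟩ = (n : ℝ) := by
    have h1 := (hbd ⟨k+l, by omega⟩).1
    have h2 := (hbd ⟨k+l, by omega⟩).2
    unfold hookLo at h1
    unfold hookHi at h2
    simp only at h1 h2
    rw [if_neg (by omega), if_neg (by omega)] at h1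
    rw [if_neg (by omega), if_neg (by omega)] at h2
    push_cast at h1 h2
    linarith
  refine ⟨?_, ?_, ?_, ?_⟩
  · intro r hr1 hr2
    rw [A_toU k l y r hr2, hy0, sub_zero]
    have h2 := (hbd ⟨r, by omega⟩).2
    unfold hookHi at h2
    simp only at h2
    rw [if_neg (by omega), if_pos (by omega)] at h2
    exact_mod_cast h2
  · intro s hs1 hs2
    rw [B_toU k l y s hs2, hyN]
    have h1 := (hbd ⟨k+l-s, by omega⟩).1
    unfold hookLo at h1
    simp only at h1
    rw [if_neg (by omega), if_pos (by omega)] at h1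
    have hidx : k + l - (k + l - s) = s := by omega
    rw [hidx] at h1
    push_cast at h1
    linarith
  · rw [← SA_SB_total k l (toU k l y), A_toU k l y k le_rfl,
      B_toU k l y l le_rfl, hy0, hyN]
    have hidx : (⟨k+l-l, by omega⟩ : Fin (k+l+1)) = ⟨k, by omega⟩ := by
      apply Fin.ext; simp
    rw [hidx]
    ring
  · intro i
    unfold toU
    by_cases h : (i:ℕ) < k
    · rw [dif_pos h]
      have := hmono (show (⟨(i:ℕ), by omega⟩ : Fin (k+l+1)) ≤ ⟨(i:ℕ)+1, by omega⟩ from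
        Fin.mk_le_mk.mpr (by omega))
      linarith
    · rw [dif_neg h]
      have hi := i.isLt
      have := hmono (show (⟨2*k+l-1-(i:ℕ), by omega⟩ : Fin (k+l+1)) ≤
        ⟨2*k+l-(i:ℕ), by omega⟩ from Fin.mk_le_mk.mpr (by omega))
      linarith

lemma toY_le_k (n : ℕ) (u : Fin (k+l) → ℝ) (m : ℕ) (hm : m ≤ k) :
    toY k l n u ⟨m, by omega⟩ = SA k l m u := by
  unfold toY
  rw [if_pos (by simpa using hm)]

lemma toY_else (n : ℕ) (Lf Cf : ℕ → ℕ) (u : Fin (k+l) → ℝ) (hu : u ∈ hookSet k l n Lf Cf)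
    (m : ℕ) (hm1 : k ≤ m) (hm2 : m ≤ k+l) :
    toY k l n u ⟨m, by omega⟩ = (n:ℝ) - SB k l (2*k+l-m) u := by
  rcases eq_or_lt_of_le hm1 with heq | hlt
  · rw [toY_le_k k l n u m heq.ge]
    have hidx : 2*k+l-m = k+l := by omega
    rw [hidx, ← heq]
    have := SA_SB_total k l u
    have htot := hu.2.2.1
    linarith
  · unfold toY
    rw [if_neg (by simp; omega)]

lemma toY_mem (n : ℕ) (Lf Cf : ℕ → ℕ) (u : Fin (k+l) → ℝ) (hu : u ∈ hookSet k l n Lf Cf) :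
    toY k l n u ∈ chainSet (k+l+1) (hookLo k l n Cf) (hookHi k l n Lf) := by
  obtain ⟨hL, hC, htot, hpos⟩ := hu
  have hstep : ∀ m : ℕ, (hm : m < k+l) →
      toY k l n u ⟨m, by omega⟩ ≤ toY k l n u ⟨m+1, by omega⟩ := by
    intro m hm
    by_cases hmk : m < k
    · rw [toY_le_k k l n u m (by omega), toY_le_k k l n u (m+1) (by omega),
        SA_succ k l m (by omega)]
      have := hpos ⟨m, by omega⟩
      linarith
    · rw [toY_else k l n Lf Cf u ⟨hL, hC, htot, hpos⟩ m (by omega) (by omega),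
        toY_else k l n Lf Cf u ⟨hL, hC, htot, hpos⟩ (m+1) (by omega) (by omega)]
      have hidx : 2*k+l-m = (2*k+l-(m+1)) + 1 := by omega
      rw [hidx, SB_succ k l (2*k+l-(m+1)) (by omega) (by omega)]
      have := hpos ⟨2*k+l-(m+1), by omega⟩
      linarith
  constructor
  · rw [Fin.monotone_iff_le_succ]
    intro i
    have hi := i.isLt
    have h1 : i.castSucc = (⟨(i:ℕ), by omega⟩ : Fin (k+l+1)) := by apply Fin.ext; simp
    have h2 : i.succ = (⟨(i:ℕ)+1, by omega⟩ : Fin (k+l+1)) := by apply Fin.ext; simp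
    rw [h1, h2]
    exact hstep (i:ℕ) hi
  · intro mm
    obtain ⟨m, hm⟩ := mm
    constructor
    · -- lower bound
      unfold hookLo
      simp only
      by_cases h1 : m < k
      · rw [if_pos h1, toY_le_k k l n u m (by omega)]
        simpa using SA_nonneg k l m u hpos
      · by_cases h2 : m < k+l
        · rw [if_neg h1, if_pos h2,
            toY_else k l n Lf Cf u ⟨hL, hC, htot, hpos⟩ m (by omega) (by omega)]
          have hc := hC (k+l-m) (by omega) (by omega)
          have hidx : k + (k+l-m) = 2*k+l-m := by omega
          rw [hidx] at hc
          push_cast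
          linarith
        · rw [if_neg h1, if_neg h2,
            toY_else k l n Lf Cf u ⟨hL, hC, htot, hpos⟩ m (by omega) (by omega)]
          have hidx : 2*k+l-m = k := by omega
          rw [hidx, SB_k]
          simp
    · -- upper bound
      unfold hookHi
      simp only
      by_cases h0 : m = 0
      · subst h0
        rw [if_pos rfl, toY_le_k k l n u 0 (by omega), SA_zero]
        simp
      · by_cases h1 : m ≤ k
        · rw [if_neg h0, if_pos h1, toY_le_k k l n u m h1]
          have := hL m (by omega) h1
          exact_mod_cast this
        · rw [if_neg h0, if_neg h1,
            toY_else k l n Lf Cf u ⟨hL, hC, htot, hpos⟩ m (by omega) (by omega)]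
          have := SB_nonneg k l (2*k+l-m) u hpos
          push_cast
          linarith

lemma toU_toY (n : ℕ) (Lf Cf : ℕ → ℕ) (u : Fin (k+l) → ℝ) (hu : u ∈ hookSet k l n Lf Cf) :
    toU k l (toY k l n u) = u := by
  funext i
  have hi := i.isLt
  unfold toU
  by_cases h : (i:ℕ) < k
  · rw [dif_pos h, toY_le_k k l n u ((i:ℕ)+1) (by omega), toY_le_k k l n u (i:ℕ) (by omega),
      SA_succ k l (i:ℕ) (by omega)]
    simp
  · rw [dif_neg h]
    rw [toY_else k l n Lf Cf u hu (2*k+l-(i:ℕ)) (by omega) (by omega),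
      toY_else k l n Lf Cf u hu (2*k+l-1-(i:ℕ)) (by omega) (by omega)]
    have hidx1 : 2*k+l-(2*k+l-(i:ℕ)) = (i:ℕ) := by omega
    have hidx2 : 2*k+l-(2*k+l-1-(i:ℕ)) = (i:ℕ)+1 := by omega
    rw [hidx1, hidx2, SB_succ k l (i:ℕ) (by omega) (by omega)]
    simp

lemma toU_int (y : Fin (k+l+1) → ℝ) (hy : ∀ m, ∃ z : ℤ, y m = z) :
    ∀ i, ∃ z : ℤ, toU k l y i = z := by
  intro i
  unfold toU
  by_cases h : (i:ℕ) < k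
  · rw [dif_pos h]
    obtain ⟨a, ha⟩ := hy ⟨(i:ℕ)+1, by omega⟩
    obtain ⟨b, hb⟩ := hy ⟨(i:ℕ), by omega⟩
    exact ⟨a - b, by rw [ha, hb]; push_cast; ring⟩
  · rw [dif_neg h]
    obtain ⟨a, ha⟩ := hy ⟨2*k+l-(i:ℕ), by have := i.isLt; omega⟩
    obtain ⟨b, hb⟩ := hy ⟨2*k+l-1-(i:ℕ), by have := i.isLt; omega⟩
    exact ⟨a - b, by rw [ha, hb]; push_cast; ring⟩

lemma toY_int (n : ℕ) (u : Fin (k+l) → ℝ) (hu : ∀ i, ∃ z : ℤ, u i = z) :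
    ∀ m, ∃ z : ℤ, toY k l n u m = z := by
  choose zu hzu using hu
  intro m
  unfold toY
  by_cases h : (m:ℕ) ≤ k
  · rw [if_pos h]
    refine ⟨∑ i ∈ univ.filter (fun i : Fin (k+l) => (i:ℕ) < (m:ℕ)), zu i, ?_⟩
    unfold SA
    push_cast
    exact Finset.sum_congr rfl (fun i _ => hzu i)
  · rw [if_neg h]
    refine ⟨(n:ℤ) - ∑ i ∈ univ.filter
        (fun i : Fin (k+l) => k ≤ (i:ℕ) ∧ (i:ℕ) < 2*k+l-(m:ℕ)), zu i, ?_⟩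
    unfold SB
    push_cast
    rw [Finset.sum_congr rfl (fun i _ => hzu i)]

end Transfer


/-- **Integrality of the hook polyhedron.** For a partition `λ` in the `(k,ℓ)`-hook, the
polyhedron `H = {u ∈ ℝ^{k+ℓ} : Σ_{i≤r} u_i ≤ L_r (1 ≤ r ≤ k), Σ_{j≤s} u_{k+j} ≤ C_s
(1 ≤ s ≤ ℓ), Σ_i u_i = |λ|, u ≥ 0}` is integral: it equals the convex hull of its
integer points. -/
theorem hook_polyhedron_integral (k l : ℕ) (hk : 1 ≤ k) (hl : 1 ≤ l)
    (lam : YoungDiagram) (hhook : lam.rowLen k ≤ l) :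
    let H : Set (Fin (k + l) → ℝ) := {u |
        (∀ r, 1 ≤ r → r ≤ k →
          ∑ i ∈ Finset.univ.filter (fun i : Fin (k + l) => (i : ℕ) < r), u i ≤
            (∑ i ∈ Finset.range r, lam.rowLen i : ℕ)) ∧
        (∀ s, 1 ≤ s → s ≤ l →
          ∑ i ∈ Finset.univ.filter
              (fun i : Fin (k + l) => k ≤ (i : ℕ) ∧ (i : ℕ) < k + s), u i ≤
            (∑ j ∈ Finset.range s, lam.colLen j : ℕ)) ∧
        (∑ i, u i = lam.card) ∧ (∀ i, 0 ≤ u i)}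
    H = convexHull ℝ {u ∈ H | ∀ i, ∃ z : ℤ, u i = z} := by
  intro H
  have hHdef : H = hookSet k l lam.card
      (fun r => ∑ i ∈ Finset.range r, lam.rowLen i)
      (fun s => ∑ j ∈ Finset.range s, lam.colLen j) := rfl
  set n := lam.card with hn
  set Lf : ℕ → ℕ := fun r => ∑ i ∈ Finset.range r, lam.rowLen i with hLf
  set Cf : ℕ → ℕ := fun s => ∑ j ∈ Finset.range s, lam.colLen j with hCf
  have key : hookSet k l n Lf Cf =
      convexHull ℝ {u ∈ hookSet k l n Lf Cf | ∀ i, ∃ z : ℤ, u i = z} := by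
    have himg : hookSet k l n Lf Cf =
        (phiL k l) '' (chainSet (k+l+1) (hookLo k l n Cf) (hookHi k l n Lf)) := by
      ext u
      constructor
      · intro hu
        exact ⟨toY k l n u, toY_mem k l n Lf Cf u hu, toU_toY k l n Lf Cf u hu⟩
      · rintro ⟨y, hy, rfl⟩
        exact toU_mem k l hk hl n Lf Cf y hy
    have himg2 : {u ∈ hookSet k l n Lf Cf | ∀ i, ∃ z : ℤ, u i = z}
        = (phiL k l) '' {y ∈ chainSet (k+l+1) (hookLo k l n Cf) (hookHi k l n Lf) |
            ∀ m, ∃ z : ℤ, y m = z} := by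
      ext u
      constructor
      · rintro ⟨hu, hui⟩
        exact ⟨toY k l n u, ⟨toY_mem k l n Lf Cf u hu, toY_int k l n u hui⟩,
          toU_toY k l n Lf Cf u hu⟩
      · rintro ⟨y, ⟨hy, hyi⟩, rfl⟩
        exact ⟨toU_mem k l hk hl n Lf Cf y hy, toU_int k l y hyi⟩
    conv_rhs => rw [himg2]
    conv_lhs => rw [himg, chain_integral (k+l+1) (hookLo k l n Cf) (hookHi k l n Lf)]
    exact LinearMap.image_convexHull (phiL k l) _
  rw [hHdef]
  exact key
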